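/- There exists a Z-group G such that ⋂_{n>0} nG ≠ {0} and yet G is rigid, i.e., the only order-preserving group automorphism of G fixing 1 is the identity. -/

import Mathlib

/-- A Z-group: a linearly ordered abelian group with a least positive element `one`
such that every element is congruent to an integer multiple of `one` modulo `n`,
for every integer `n > 0`. -/
structure ZGroup where
  carrier : Type
  [grp : AddCommGroup carrier]
  [lin : LinearOrder carrier]
  [ord : IsOrderedAddMonoid carrier]
  one : carrier
  one_pos : 0 < one
  one_least : ∀ x : carrier, 0 < x → one ≤ x
  div : ∀ g : carrier, ∀ n : ℤ, 0 < n → ∃ h : carrier, ∃ k : ℤ, g = n • h + k • one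

attribute [instance] ZGroup.grp
attribute [instance] ZGroup.lin
attribute [instance] ZGroup.ord

namespace NLRZ

/-- `q` has 2-power denominator. -/
def Dy (q : ℚ) : Prop := ∃ (k : ℕ) (n : ℤ), q * 2 ^ k = n

/-- `q` has odd denominator. -/
def Od (q : ℚ) : Prop := ∃ (m n : ℤ), Odd m ∧ q * m = n

lemma dy_zero : Dy 0 := ⟨0, 0, by norm_num⟩

lemma dy_int (n : ℤ) : Dy (n : ℚ) := ⟨0, n, by norm_num⟩

lemma dy_add {p q : ℚ} (hp : Dy p) (hq : Dy q) : Dy (p + q) := by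
  obtain ⟨k, n, h1⟩ := hp
  obtain ⟨k', n', h2⟩ := hq
  refine ⟨k + k', n * 2 ^ k' + n' * 2 ^ k, ?_⟩
  push_cast
  linear_combination (2 : ℚ) ^ k' * h1 + (2 : ℚ) ^ k * h2

lemma dy_neg {q : ℚ} (hq : Dy q) : Dy (-q) := by
  obtain ⟨k, n, h⟩ := hq
  exact ⟨k, -n, by push_cast; linear_combination -h⟩

lemma dy_intmul (z : ℤ) {q : ℚ} (hq : Dy q) : Dy (z * q) := by
  obtain ⟨k, n, h⟩ := hq
  exact ⟨k, z * n, by push_cast; linear_combination (z : ℚ) * h⟩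

lemma dy_two_pow_inv (k : ℕ) : Dy (1 / 2 ^ k) := ⟨k, 1, by field_simp; norm_num⟩

lemma od_zero : Od 0 := ⟨1, 0, odd_one, by norm_num⟩

lemma od_int (n : ℤ) : Od (n : ℚ) := ⟨1, n, odd_one, by norm_num⟩

lemma od_add {p q : ℚ} (hp : Od p) (hq : Od q) : Od (p + q) := by
  obtain ⟨m, n, hm, h1⟩ := hp
  obtain ⟨m', n', hm', h2⟩ := hq
  refine ⟨m * m', n * m' + n' * m, hm.mul hm', ?_⟩
  push_cast
  linear_combination (m' : ℚ) * h1 + (m : ℚ) * h2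

lemma od_neg {q : ℚ} (hq : Od q) : Od (-q) := by
  obtain ⟨m, n, hm, h⟩ := hq
  exact ⟨m, -n, hm, by push_cast; linear_combination -h⟩

lemma od_intmul (z : ℤ) {q : ℚ} (hq : Od q) : Od (z * q) := by
  obtain ⟨m, n, hm, h⟩ := hq
  exact ⟨m, z * n, hm, by push_cast; linear_combination (z : ℚ) * h⟩

lemma od_three_pow_inv (k : ℕ) : Od (1 / 3 ^ k) :=
  have h3 : Odd (3 : ℤ) := ⟨1, by ring⟩
  ⟨3 ^ k, 1, h3.pow, by push_cast; field_simp⟩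

lemma isCoprime_two_pow_of_odd {m : ℤ} (hm : Odd m) (k : ℕ) :
    IsCoprime ((2 : ℤ) ^ k) m := by
  obtain ⟨j, hj⟩ := hm
  have h2 : IsCoprime (2 : ℤ) m := ⟨-j, 1, by rw [hj]; ring⟩
  exact h2.pow_left

lemma int_of_dy_od {q : ℚ} (hd : Dy q) (ho : Od q) : ∃ z : ℤ, q = z := by
  obtain ⟨k, n1, h1⟩ := hd
  obtain ⟨m, n2, hm, h2⟩ := ho
  obtain ⟨u, v, huv⟩ := isCoprime_two_pow_of_odd hm k
  refine ⟨u * n1 + v * n2, ?_⟩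
  have hc : (u : ℚ) * 2 ^ k + v * m = 1 := by exact_mod_cast huv
  push_cast
  linear_combination (u : ℚ) * h1 + (v : ℚ) * h2 - q * hc

lemma num_eq (q : ℚ) : (q.num : ℚ) = q * q.den := by
  have h := Rat.num_div_den q
  have hd : (q.den : ℚ) ≠ 0 := by exact_mod_cast q.den_ne_zero
  rw [div_eq_iff hd] at h
  exact h

lemma eq_zero_of_forall_od_div_pow2 {q : ℚ} (h : ∀ k : ℕ, Od (q / 2 ^ k)) : q = 0 := by
  by_contra hq
  have hnum : q.num ≠ 0 := Rat.num_ne_zero.mpr hq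
  have key : ∀ k : ℕ, (2 : ℤ) ^ k ∣ q.num := by
    intro k
    obtain ⟨m, n, hm, hqm⟩ := h k
    have h2 : q * m = n * 2 ^ k := by
      field_simp at hqm
      linarith [hqm]
    have hZ : q.num * m = n * 2 ^ k * q.den := by
      have : (q.num : ℚ) * m = (n : ℚ) * 2 ^ k * q.den := by
        rw [num_eq q]; linear_combination (q.den : ℚ) * h2
      exact_mod_cast this
    have : (2 : ℤ) ^ k ∣ q.num * m := ⟨n * q.den, by linarith [hZ]⟩
    exact (isCoprime_two_pow_of_odd hm k).dvd_of_dvd_mul_right this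
  set N := q.num.natAbs with hN
  have h1 : (2 : ℤ) ^ N ≤ |q.num| :=
    Int.le_of_dvd (abs_pos.mpr hnum) ((dvd_abs _ _).mpr (key N))
  have h2 : ((N : ℤ)) < 2 ^ N := by exact_mod_cast Nat.lt_two_pow_self (n := N)
  rw [Int.abs_eq_natAbs, ← hN] at h1
  have := h1.trans_lt h2
  simp at this



lemma eq_zero_of_forall_dy_div_pow3 {q : ℚ} (h : ∀ k : ℕ, Dy (q / 3 ^ k)) : q = 0 := by
  by_contra hq
  have hnum : q.num ≠ 0 := Rat.num_ne_zero.mpr hq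
  have key : ∀ k : ℕ, (3 : ℤ) ^ k ∣ q.num := by
    intro k
    obtain ⟨j, n, hqj⟩ := h k
    have h2 : q * 2 ^ j = n * 3 ^ k := by
      field_simp at hqj
      linarith [hqj]
    have hZ : q.num * 2 ^ j = n * 3 ^ k * q.den := by
      have : (q.num : ℚ) * 2 ^ j = (n : ℚ) * 3 ^ k * q.den := by
        rw [num_eq q]; linear_combination (q.den : ℚ) * h2
      exact_mod_cast this
    have hdvd : (3 : ℤ) ^ k ∣ q.num * 2 ^ j := ⟨n * q.den, by linarith [hZ]⟩
    have hcop : IsCoprime ((3 : ℤ) ^ k) ((2 : ℤ) ^ j) :=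
      IsCoprime.pow (⟨1, -1, by ring⟩ : IsCoprime (3 : ℤ) 2)
    exact hcop.dvd_of_dvd_mul_right hdvd
  set N := q.num.natAbs with hN
  have h1 : (3 : ℤ) ^ N ≤ |q.num| :=
    Int.le_of_dvd (abs_pos.mpr hnum) ((dvd_abs _ _).mpr (key N))
  have h2 : ((N : ℤ)) < 3 ^ N := by
    calc ((N : ℤ)) < 2 ^ N := by exact_mod_cast Nat.lt_two_pow_self (n := N)
    _ ≤ 3 ^ N := pow_le_pow_left₀ (by norm_num) (by norm_num) N
  rw [Int.abs_eq_natAbs, ← hN] at h1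
  have := h1.trans_lt h2
  simp at this

lemma decomp (q : ℚ) : ∃ u v : ℚ, q = u + v ∧ Dy u ∧ Od v := by
  obtain ⟨k, m, hm, hden⟩ := Nat.exists_eq_two_pow_mul_odd (q.den_ne_zero)
  have hmz : Odd (m : ℤ) := by exact_mod_cast hm
  obtain ⟨j, hj⟩ := hmz
  have hcop : IsCoprime ((2 : ℤ) ^ k) (m : ℤ) :=
    IsCoprime.pow_left (⟨-j, 1, by rw [hj]; ring⟩ : IsCoprime (2 : ℤ) (m : ℤ))
  obtain ⟨u, v, huv⟩ := hcop
  have hc : (u : ℚ) * 2 ^ k + v * m = 1 := by exact_mod_cast huv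
  have hdenq : (q.den : ℚ) = 2 ^ k * m := by exact_mod_cast hden
  refine ⟨q * v * m, q * u * 2 ^ k, by linear_combination -q * hc, ?_, ?_⟩
  · refine ⟨k, q.num * v, ?_⟩
    push_cast
    have := num_eq q
    rw [hdenq] at this
    linear_combination (-(v : ℚ)) * this
  · refine ⟨m, q.num * u, by exact_mod_cast hm, ?_⟩
    push_cast
    have := num_eq q
    rw [hdenq] at this
    linear_combination (-(u : ℚ)) * this

noncomputable def alp : ℝ := liouvilleNumber 3

lemma talpha : Transcendental ℚ alp := fun h =>
  transcendental_liouvilleNumber (by norm_num)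
    ((IsFractionRing.isAlgebraic_iff ℤ ℚ ℝ).mpr h)

lemma indep {a b c : ℚ} (h : (a : ℝ) + b * alp + c * alp ^ 2 = 0) :
    a = 0 ∧ b = 0 ∧ c = 0 := by
  by_contra hc
  apply talpha
  refine ⟨Polynomial.C a + Polynomial.C b * Polynomial.X + Polynomial.C c * Polynomial.X ^ 2,
    ?_, ?_⟩
  · intro h0
    apply hc
    have h₀ := congrArg (fun p => Polynomial.coeff p 0) h0
    have h₁ := congrArg (fun p => Polynomial.coeff p 1) h0
    have h₂ := congrArg (fun p => Polynomial.coeff p 2) h0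
    simp [Polynomial.coeff_add, Polynomial.coeff_C, Polynomial.coeff_C_mul,
      Polynomial.coeff_X, Polynomial.coeff_X_pow] at h₀ h₁ h₂
    exact ⟨h₀, h₁, h₂⟩
  · simp only [map_add, map_mul, Polynomial.aeval_C, Polynomial.aeval_X, map_pow]
    rw [show (algebraMap ℚ ℝ) a = (a : ℝ) from by norm_num,
      show (algebraMap ℚ ℝ) b = (b : ℝ) from by norm_num,
      show (algebraMap ℚ ℝ) c = (c : ℝ) from by norm_num]
    exact h

lemma indep2 {a b a' b' : ℚ} (h : (a : ℝ) + b * alp = a' + b' * alp) : a = a' ∧ b = b' := by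
  have h2 : ((a - a' : ℚ) : ℝ) + (b - b' : ℚ) * alp + (0 : ℚ) * alp ^ 2 = 0 := by
    push_cast
    linarith [h]
  obtain ⟨h3, h4, -⟩ := indep h2
  exact ⟨sub_eq_zero.mp h3, sub_eq_zero.mp h4⟩



/-! ## The carrier group -/

abbrev L : Type := ℝ ×ₗ ℚ

/-- First (real) component. -/
noncomputable def p1 : L →+ ℝ where
  toFun x := (ofLex x).1
  map_zero' := rfl
  map_add' _ _ := rfl

/-- Second (rational) component. -/
noncomputable def p2 : L →+ ℚ where
  toFun x := (ofLex x).2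
  map_zero' := rfl
  map_add' _ _ := rfl

@[simp] lemma p1_toLex (r : ℝ) (s : ℚ) : p1 (toLex (r, s)) = r := rfl
@[simp] lemma p2_toLex (r : ℝ) (s : ℚ) : p2 (toLex (r, s)) = s := rfl

lemma L_ext {x y : L} (h1 : p1 x = p1 y) (h2 : p2 x = p2 y) : x = y := by
  apply ofLex.injective
  exact Prod.ext h1 h2

lemma L_lt_iff (x y : L) : x < y ↔ p1 x < p1 y ∨ (p1 x = p1 y ∧ p2 x < p2 y) :=
  Prod.Lex.lt_iff

lemma L_le_iff (x y : L) : x ≤ y ↔ p1 x < p1 y ∨ (p1 x = p1 y ∧ p2 x ≤ p2 y) :=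
  Prod.Lex.le_iff

/-- The membership predicate: `x = (a + b·α, s)` with `s` dyadic and `a - s` of odd
denominator. -/
def P (x : L) : Prop :=
  ∃ a b : ℚ, p1 x = (a : ℝ) + (b : ℝ) * alp ∧ Dy (p2 x) ∧ Od (a - p2 x)

noncomputable def S : AddSubgroup L where
  carrier := {x | P x}
  zero_mem' := ⟨0, 0, by simp, by simpa using dy_zero, by simpa using od_zero⟩
  add_mem' := by
    rintro x y ⟨a, b, hab, hdy, hod⟩ ⟨a', b', hab', hdy', hod'⟩
    refine ⟨a + a', b + b', ?_, ?_, ?_⟩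
    · rw [map_add, hab, hab']; push_cast; ring
    · rw [map_add]; exact dy_add hdy hdy'
    · rw [map_add]
      have : a + a' - (p2 x + p2 y) = (a - p2 x) + (a' - p2 y) := by ring
      rw [this]; exact od_add hod hod'
  neg_mem' := by
    rintro x ⟨a, b, hab, hdy, hod⟩
    refine ⟨-a, -b, ?_, ?_, ?_⟩
    · rw [map_neg, hab]; push_cast; ring
    · rw [map_neg]; exact dy_neg hdy
    · rw [map_neg]
      have : -a - -p2 x = -(a - p2 x) := by ring
      rw [this]; exact od_neg hod

/-- Real part, as an additive hom on `S`. -/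
noncomputable def RR : S →+ ℝ := p1.comp S.subtype
/-- Rational part, as an additive hom on `S`. -/
noncomputable def QQ : S →+ ℚ := p2.comp S.subtype

lemma RR_apply (x : S) : RR x = p1 x.val := rfl
lemma QQ_apply (x : S) : QQ x = p2 x.val := rfl

lemma S_ext {x y : S} (h1 : RR x = RR y) (h2 : QQ x = QQ y) : x = y :=
  Subtype.ext (L_ext h1 h2)

lemma S_lt_iff (x y : S) : x < y ↔ RR x < RR y ∨ (RR x = RR y ∧ QQ x < QQ y) :=
  L_lt_iff x.val y.val

lemma S_le_iff (x y : S) : x ≤ y ↔ RR x < RR y ∨ (RR x = RR y ∧ QQ x ≤ QQ y) :=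
  L_le_iff x.val y.val

lemma getW (x : S) : ∃ a b : ℚ, RR x = (a : ℝ) + (b : ℝ) * alp ∧ Dy (QQ x) ∧ Od (a - QQ x) :=
  x.2

/-- The least positive element `(0, 1)`. -/
noncomputable def onee : S :=
  ⟨toLex ((0 : ℝ), (1 : ℚ)), 0, 0, by simp, by simpa using dy_int 1,
    by simpa using od_int (-1)⟩

@[simp] lemma RR_onee : RR onee = 0 := rfl
@[simp] lemma QQ_onee : QQ onee = 1 := rfl

lemma RR_zsmul (n : ℤ) (x : S) : RR (n • x) = n * RR x := by
  rw [map_zsmul]; exact zsmul_eq_mul _ _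

lemma QQ_zsmul (n : ℤ) (x : S) : QQ (n • x) = n * QQ x := by
  rw [map_zsmul]; exact zsmul_eq_mul _ _

/-- Elements with vanishing real part are integer multiples of `onee`. -/
lemma eq_zsmul_onee_of_RR_zero {x : S} (hx : RR x = 0) :
    ∃ m : ℤ, (QQ x : ℚ) = m ∧ x = m • onee := by
  obtain ⟨a, b, hab, hdy, hod⟩ := getW x
  rw [hx] at hab
  obtain ⟨ha, hb, -⟩ := indep (a := a) (b := b) (c := 0) (by push_cast; linarith [hab])
  rw [ha] at hod
  have hodq : Od (QQ x) := by
    have : QQ x = -(0 - QQ x) := by ring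
    rw [this]; exact od_neg hod
  obtain ⟨m, hm⟩ := int_of_dy_od hdy hodq
  refine ⟨m, hm, S_ext ?_ ?_⟩
  · rw [hx, RR_zsmul]; simp
  · rw [hm, QQ_zsmul]; simp

lemma one_least' (x : S) (hx : 0 < x) : onee ≤ x := by
  rcases (S_lt_iff 0 x).mp hx with h | ⟨h1, h2⟩
  · rw [map_zero] at h
    exact (S_le_iff onee x).mpr (Or.inl (by simpa using h))
  · rw [map_zero] at h1; rw [map_zero] at h2
    obtain ⟨m, hm, hxm⟩ := eq_zsmul_onee_of_RR_zero h1.symm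
    have hm1 : (1 : ℚ) ≤ QQ x := by
      have : 0 < m := by exact_mod_cast hm ▸ h2
      rw [hm]; exact_mod_cast this
    exact (S_le_iff onee x).mpr (Or.inr ⟨by simp [← h1], by simpa using hm1⟩)

lemma one_pos' : 0 < onee := by
  rw [S_lt_iff]
  right
  simp

/-- The division property of a Z-group. -/
lemma div' (g : S) (n : ℤ) (hn : 0 < n) : ∃ h : S, ∃ k : ℤ, g = n • h + k • onee := by
  obtain ⟨a, b, hab, hdy, hod⟩ := getW g
  obtain ⟨σ, τ, hστ, hdyσ, hodτ⟩ := decomp (a / n)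
  have hnQ : (n : ℚ) ≠ 0 := by exact_mod_cast hn.ne'
  have hnR : (n : ℝ) ≠ 0 := by exact_mod_cast hn.ne'
  have hmem : P (toLex (((a / n : ℚ) : ℝ) + ((b / n : ℚ) : ℝ) * alp, σ)) := by
    refine ⟨a / n, b / n, by simp, by simpa using hdyσ, ?_⟩
    rw [hστ]
    simpa using hodτ
  set h : S := ⟨_, hmem⟩ with hh
  have hRh : RR h = ((a / n : ℚ) : ℝ) + ((b / n : ℚ) : ℝ) * alp := rfl
  have hQh : QQ h = σ := rfl
  -- the integer k
  have hdyk : Dy (QQ g - n * σ) := by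
    have e : QQ g - n * σ = QQ g + -((n : ℚ) * σ) := by ring
    rw [e]; exact dy_add hdy (dy_neg (dy_intmul n hdyσ))
  have hodk : Od (QQ g - n * σ) := by
    have he : QQ g - n * σ = -(a - QQ g) + n * τ := by
      have : (a : ℚ) = n * (σ + τ) := by
        rw [← hστ]; field_simp
      linear_combination this
    rw [he]
    exact od_add (od_neg hod) (od_intmul n hodτ)
  obtain ⟨k, hk⟩ := int_of_dy_od hdyk hodk
  refine ⟨h, k, S_ext ?_ ?_⟩
  · rw [map_add, RR_zsmul, RR_zsmul, hRh, hab, RR_onee]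
    push_cast
    field_simp
    ring
  · rw [map_add, QQ_zsmul, QQ_zsmul, hQh, QQ_onee]
    have : QQ g = n * σ + k := by rw [← hk]; ring
    rw [this]; ring

/-- The infinitely divisible element `(α, 0)`. -/
noncomputable def gdiv : S :=
  ⟨toLex (alp, (0 : ℚ)), 0, 1, by simp, by simpa using dy_zero, by simpa using od_zero⟩

lemma gdiv_ne : gdiv ≠ 0 := by
  intro h
  have h1 : RR gdiv = 0 := by rw [h, map_zero]
  have : alp = 0 := h1
  exact talpha (by rw [this]; exact isAlgebraic_zero)

lemma gdiv_div (n : ℤ) (hn : 0 < n) : ∃ h : S, gdiv = n • h := by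
  have hnR : ((n : ℚ) : ℝ) ≠ 0 := by exact_mod_cast hn.ne'
  have hmem : P (toLex (((0 : ℚ) : ℝ) + (((1 : ℚ) / n : ℚ) : ℝ) * alp, (0 : ℚ))) :=
    ⟨0, 1 / n, by simp, by simpa using dy_zero, by simpa using od_zero⟩
  refine ⟨⟨_, hmem⟩, S_ext ?_ ?_⟩
  · rw [RR_zsmul]
    show alp = n * (((0 : ℚ) : ℝ) + (((1 : ℚ) / n : ℚ) : ℝ) * alp)
    push_cast
    field_simp
    ring
  · rw [QQ_zsmul]
    show (0 : ℚ) = n * 0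
    ring



/-! ## Rigidity -/

/-- A distinguished element `(1,1)` of `S`. -/
lemma u1_mem : P (toLex ((1 : ℝ), (1 : ℚ))) := by
  refine ⟨1, 0, ?_, ?_, ?_⟩
  · rw [p1_toLex]; norm_num
  · rw [p2_toLex]; simpa using dy_int 1
  · rw [p2_toLex]; simpa using od_zero

noncomputable def u1 : S := ⟨toLex ((1 : ℝ), (1 : ℚ)), u1_mem⟩

@[simp] lemma RR_u1 : RR u1 = 1 := rfl
@[simp] lemma QQ_u1 : QQ u1 = 1 := rfl

/-- A distinguished element `(1,0)` of `S`. -/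
lemma u1'_mem : P (toLex ((1 : ℝ), (0 : ℚ))) := by
  refine ⟨1, 0, ?_, ?_, ?_⟩
  · rw [p1_toLex]; norm_num
  · rw [p2_toLex]; exact dy_zero
  · rw [p2_toLex]
    simpa using od_int 1

noncomputable def u1' : S := ⟨toLex ((1 : ℝ), (0 : ℚ)), u1'_mem⟩

@[simp] lemma RR_u1' : RR u1' = 1 := rfl
@[simp] lemma QQ_u1' : QQ u1' = 0 := rfl

lemma fix_of_RR_zero (g : S ≃+ S) (hg : g onee = onee) {x : S} (hx : RR x = 0) :
    g x = x := by
  obtain ⟨m, hmq, hmx⟩ := eq_zsmul_onee_of_RR_zero hx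
  rw [hmx, map_zsmul, hg]

lemma symm_fixes (g : S ≃+ S) (hg : g onee = onee) : g.symm onee = onee := by
  conv_lhs => rw [← hg]
  exact g.symm_apply_apply onee

lemma symm_monotone (f : S ≃+ S) (hm : Monotone f) : Monotone f.symm := by
  have hsm : StrictMono ⇑f := hm.strictMono_of_injective f.injective
  intro a b hab
  by_contra hc
  have h2 : f (f.symm b) < f (f.symm a) := hsm (not_le.mp hc)
  rw [f.apply_symm_apply, f.apply_symm_apply] at h2
  exact absurd hab (not_le.mpr h2)

lemma scalar (f : S ≃+ S) (hm : Monotone f) (h1 : f onee = onee) :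
    ∃ z : ℤ, 1 ≤ z ∧ ∀ x : S, RR (f x) = (z : ℝ) * RR x := by
  have hsm : StrictMono ⇑f := hm.strictMono_of_injective f.injective
  have hCz : ∀ x : S, RR (f x) = 0 → RR x = 0 := by
    intro x hfx
    have h2 : f.symm (f x) = f x := fix_of_RR_zero f.symm (symm_fixes f h1) hfx
    rw [f.symm_apply_apply] at h2
    rw [h2]; exact hfx
  have hpos : ∀ x : S, 0 < RR x → 0 < RR (f x) := by
    intro x hx
    have h0 : (0 : S) < x := (S_lt_iff 0 x).mpr (Or.inl (by simpa using hx))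
    have h2 : (0 : S) < f x := by
      have := hsm h0; rwa [map_zero] at this
    rcases (S_lt_iff 0 (f x)).mp h2 with h | ⟨h, -⟩
    · simpa using h
    · exfalso
      have : RR (f x) = 0 := by rw [← h, map_zero]
      exact absurd (hCz x this) hx.ne'
  have claim : ∀ x y : S, ∀ m n : ℤ, (m : ℝ) * RR x < (n : ℝ) * RR y →
      (m : ℝ) * RR (f x) ≤ (n : ℝ) * RR (f y) := by
    intro x y m n hmn
    have hlt : m • x < n • y :=
      (S_lt_iff _ _).mpr (Or.inl (by rw [RR_zsmul, RR_zsmul]; exact hmn))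
    have hle := hm hlt.le
    rw [map_zsmul, map_zsmul] at hle
    rcases (S_le_iff _ _).mp hle with h | ⟨h, -⟩
    · rw [RR_zsmul, RR_zsmul] at h; exact h.le
    · rw [RR_zsmul, RR_zsmul] at h; exact h.le
  have ratio_le : ∀ x y : S, 0 < RR x → 0 < RR y →
      RR (f x) * RR y ≤ RR (f y) * RR x := by
    intro x y hx hy
    by_contra hcon
    push_neg at hcon
    have hfx := hpos x hx
    have hfy := hpos y hy
    have hd : RR (f y) / RR (f x) < RR y / RR x := by
      rw [div_lt_div_iff₀ hfx hx]
      linarith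
    obtain ⟨q, hq1, hq2⟩ := exists_rat_btwn hd
    have hqc : (q : ℝ) = (q.num : ℝ) / ((q.den : ℤ) : ℝ) := by
      rw [Rat.cast_def]
      push_cast
      ring
    have hden : (0 : ℝ) < ((q.den : ℤ) : ℝ) := by
      have := q.pos
      push_cast
      exact_mod_cast this
    have h3 : ((q.num : ℝ)) * RR x < ((q.den : ℤ) : ℝ) * RR y := by
      rw [hqc] at hq2
      have := (div_lt_div_iff₀ hden hx).mp hq2
      linarith
    have h4 := claim x y q.num (q.den : ℤ) h3
    have h5 : RR (f y) * ((q.den : ℤ) : ℝ) < (q.num : ℝ) * RR (f x) := by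
      rw [hqc] at hq1
      have := (div_lt_div_iff₀ hfx hden).mp hq1
      linarith
    linarith
  have ratio_eq : ∀ x y : S, 0 < RR x → 0 < RR y →
      RR (f x) * RR y = RR (f y) * RR x := fun x y hx hy =>
    le_antisymm (ratio_le x y hx hy) (by linarith [ratio_le y x hy hx])
  set c : ℝ := RR (f u1) with hcdef
  have hc0 : 0 < c := hpos u1 (by simp)
  have hF : ∀ x : S, RR (f x) = c * RR x := by
    have hposF : ∀ x : S, 0 < RR x → RR (f x) = c * RR x := by
      intro x hx
      have := ratio_eq x u1 hx (by simp)
      simpa using this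
    intro x
    rcases lt_trichotomy (RR x) 0 with h | h | h
    · have hx' : 0 < RR (-x) := by rw [map_neg]; linarith
      have := hposF (-x) hx'
      rw [map_neg, map_neg, map_neg] at this
      linarith
    · rw [fix_of_RR_zero f h1 h, h, mul_zero]
    · exact hposF x h
  -- `c` is a rational
  obtain ⟨A, B, hAB, hdyT, hodT⟩ := getW (f u1)
  obtain ⟨A₂, B₂, hAB2, -, -⟩ := getW (f gdiv)
  have hcα : RR (f gdiv) = c * alp := by
    rw [hF gdiv]; rfl
  have hrel : ((-A₂ : ℚ) : ℝ) + ((A - B₂ : ℚ) : ℝ) * alp + (B : ℝ) * alp ^ 2 = 0 := by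
    have h5 : (A₂ : ℝ) + (B₂ : ℝ) * alp = ((A : ℝ) + (B : ℝ) * alp) * alp := by
      rw [← hAB2, hcα, hcdef, hAB]
    push_cast
    linear_combination -h5
  obtain ⟨-, -, hB0⟩ := indep hrel
  have hcA : c = (A : ℝ) := by
    rw [hcdef, hAB, hB0]
    push_cast
    ring
  -- 2-adic step: `A` is dyadic
  set t : ℚ := QQ (f u1) with htdef
  have h2ad : ∀ k : ℕ, Od ((A - t) / 2 ^ k) := by
    intro k
    have hmemk : P (toLex ((((1 : ℚ) / 2 ^ k : ℚ) : ℝ), (1 : ℚ) / 2 ^ k)) :=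
      ⟨1 / 2 ^ k, 0, by simp, by simpa using dy_two_pow_inv k, by simpa using od_zero⟩
    set ek : S := ⟨_, hmemk⟩ with hek
    have hRek : RR ek = (((1 : ℚ) / 2 ^ k : ℚ) : ℝ) := rfl
    have hQek : QQ ek = 1 / 2 ^ k := rfl
    have h2k : ((2 : ℤ) ^ k) • ek = u1 := by
      refine S_ext ?_ ?_
      · rw [RR_zsmul, hRek]
        push_cast
        field_simp
        simp
      · rw [QQ_zsmul, hQek]
        push_cast
        field_simp
        simp
    have hfe : ((2 : ℤ) ^ k) • f ek = f u1 := by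
      rw [← map_zsmul, h2k]
    have hQfek : QQ (f ek) = t / 2 ^ k := by
      have := congrArg QQ hfe
      rw [QQ_zsmul] at this
      rw [htdef, ← this]
      push_cast
      field_simp
    have hRfek : RR (f ek) = ((A / 2 ^ k : ℚ) : ℝ) := by
      rw [hF ek, hcA, hRek]
      push_cast
      ring
    obtain ⟨a', b', hab', -, hod'⟩ := getW (f ek)
    have huniq : a' = A / 2 ^ k ∧ b' = 0 := by
      have : ((A / 2 ^ k : ℚ) : ℝ) + ((0 : ℚ) : ℝ) * alp = (a' : ℝ) + (b' : ℝ) * alp := by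
        rw [← hab', hRfek]; push_cast; ring
      obtain ⟨h6, h7⟩ := indep2 this
      exact ⟨h6.symm, h7.symm⟩
    rw [huniq.1, hQfek] at hod'
    have : A / 2 ^ k - t / 2 ^ k = (A - t) / 2 ^ k := by ring
    rwa [this] at hod'
  have hAt : A = t := by
    have := eq_zero_of_forall_od_div_pow2 h2ad
    linarith [this]
  have hdyA : Dy A := by rw [hAt, htdef]; exact hdyT
  -- 3-adic step: `A` has odd denominator
  set v : ℚ := QQ (f u1') with hvdef
  have h3ad : ∀ k : ℕ, Dy (v / 3 ^ k) := by
    intro k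
    have hmemk : P (toLex ((((1 : ℚ) / 3 ^ k : ℚ) : ℝ), (0 : ℚ))) :=
      ⟨1 / 3 ^ k, 0, by simp, by simpa using dy_zero, by simpa using od_three_pow_inv k⟩
    set ok : S := ⟨_, hmemk⟩ with hok
    have hRok : RR ok = (((1 : ℚ) / 3 ^ k : ℚ) : ℝ) := rfl
    have hQok : QQ ok = 0 := rfl
    have h3k : ((3 : ℤ) ^ k) • ok = u1' := by
      refine S_ext ?_ ?_
      · rw [RR_zsmul, hRok]
        push_cast
        field_simp
        simp
      · rw [QQ_zsmul, hQok]
        simp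
    have hfe : ((3 : ℤ) ^ k) • f ok = f u1' := by
      rw [← map_zsmul, h3k]
    have hQfok : QQ (f ok) = v / 3 ^ k := by
      have := congrArg QQ hfe
      rw [QQ_zsmul] at this
      rw [hvdef, ← this]
      push_cast
      field_simp
    obtain ⟨-, -, -, hdy', -⟩ := getW (f ok)
    rwa [hQfok] at hdy'
  have hv0 : v = 0 := eq_zero_of_forall_dy_div_pow3 h3ad
  obtain ⟨A', B', hab', -, hod'⟩ := getW (f u1')
  have hA'A : A' = A := by
    have h8 : RR (f u1') = c * 1 := by rw [hF u1']; simp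
    have : ((A : ℚ) : ℝ) + ((0 : ℚ) : ℝ) * alp = (A' : ℝ) + (B' : ℝ) * alp := by
      rw [← hab', h8, hcA]; push_cast; ring
    exact (indep2 this).1.symm
  have hodA : Od A := by
    rw [hvdef] at hv0
    rw [hA'A, hv0] at hod'
    simpa using hod'
  obtain ⟨z, hz⟩ := int_of_dy_od hdyA hodA
  have hz1 : 1 ≤ z := by
    have : (0 : ℝ) < (A : ℝ) := by rw [← hcA]; exact hc0
    have hA0 : 0 < A := by exact_mod_cast this
    have : (0 : ℚ) < (z : ℚ) := by rw [← hz]; exact hA0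
    exact_mod_cast this
  refine ⟨z, hz1, fun x => ?_⟩
  rw [hF x, hcA, hz]
  push_cast
  ring

lemma rigid (f : S ≃+ S) (hm : Monotone f) (h1 : f onee = onee) : ∀ x : S, f x = x := by
  obtain ⟨z, hz1, hzf⟩ := scalar f hm h1
  obtain ⟨z', hz'1, hz'f⟩ := scalar f.symm (symm_monotone f hm) (symm_fixes f h1)
  have hzz : (z' : ℝ) * ((z : ℝ) * 1) = 1 := by
    have h2 : RR (f.symm (f u1)) = (z' : ℝ) * RR (f u1) := hz'f (f u1)
    rw [f.symm_apply_apply, hzf u1] at h2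
    simpa using h2.symm
  have hz_one : z = 1 := by
    have hZ : z' * z = 1 := by exact_mod_cast (by linarith [hzz] : (z' : ℝ) * (z : ℝ) = 1)
    nlinarith
  intro x
  have hd : RR (f x - x) = 0 := by
    rw [map_sub, hzf x, hz_one]
    push_cast
    ring
  obtain ⟨m, hmq, hmx⟩ := eq_zsmul_onee_of_RR_zero hd
  have hdiv : ∀ n : ℤ, 0 < n → n ∣ m := by
    intro n hn
    obtain ⟨h, k, hg⟩ := div' x n hn
    have h2 : f x - x = n • (f h - h) := by
      have : f x = n • f h + k • onee := by rw [hg, map_add, map_zsmul, map_zsmul, h1]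
      rw [this, hg, smul_sub]
      abel
    have hdh : RR (f h - h) = 0 := by
      rw [map_sub, hzf h, hz_one]
      push_cast
      ring
    obtain ⟨m', hm'q, hm'x⟩ := eq_zsmul_onee_of_RR_zero hdh
    have h3 : m • onee = (n * m') • onee := by
      rw [← hmx, h2, hm'x, mul_smul]
    have h4 : (m : ℚ) = (n : ℚ) * (m' : ℚ) := by
      have := congrArg QQ h3
      rw [QQ_zsmul, QQ_zsmul, QQ_onee] at this
      simpa using this
    exact ⟨m', by exact_mod_cast h4⟩
  have hm0 : m = 0 := by
    by_contra h0
    have h2 := hdiv (|m| + 1) (by positivity)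
    have h3 := Int.le_of_dvd (abs_pos.mpr h0) ((dvd_abs _ _).mpr h2)
    omega
  have : f x - x = 0 := by rw [hmx, hm0]; simp
  exact sub_eq_zero.mp this


end NLRZ

/-- There exists a non-Leibnizian rigid Z-group: a Z-group `G` with
`⋂_{n>0} nG ≠ 0` whose only order-preserving automorphism fixing `1` is the
identity. -/
theorem exists_nonleibnizian_rigid_zgroup :
    ∃ Z : ZGroup,
      (∃ g : Z.carrier, g ≠ 0 ∧ ∀ n : ℤ, 0 < n → ∃ h : Z.carrier, g = n • h) ∧
      (∀ f : Z.carrier ≃+ Z.carrier, Monotone f → f Z.one = Z.one →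
        ∀ x : Z.carrier, f x = x) := by
  refine ⟨⟨↥NLRZ.S, NLRZ.onee, NLRZ.one_pos', NLRZ.one_least', NLRZ.div'⟩,
    ⟨NLRZ.gdiv, NLRZ.gdiv_ne, fun n hn => NLRZ.gdiv_div n hn⟩, ?_⟩
  intro f hm h1 x
  exact NLRZ.rigid f hm h1 x
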